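/- Let V be a real inner product space, let γ₁, γ₂ ∈ V be nonzero orthogonal vectors, and set σ = γ₁ + γ₂. If χ ∈ V satisfies 2(χ,γ₁)/(γ₁,γ₁) = 2(χ,γ₂)/(γ₂,γ₂), then s_{γ₁}(s_{γ₂}(χ)) = s_σ(χ), i.e. the composite of the reflections in γ₁ and γ₂ agrees on χ with the reflection in σ: s_{γ₁}(s_{γ₂}(χ)) = χ − (2(χ,σ)/(σ,σ))·σ. -/

import Mathlib

open RealInnerProductSpace

/-- The pairing `⟨x | v∨⟩ = 2(x,v)/(v,v)` of a vector against the "coroot" of `v`. -/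
noncomputable def pairR {V : Type*} [NormedAddCommGroup V] [InnerProductSpace ℝ V]
    (x v : V) : ℝ := 2 * ⟪x, v⟫ / ⟪v, v⟫

/-- The reflection `s_v(x) = x - ⟨x|v∨⟩ v` in the nonzero vector `v`. -/
noncomputable def reflV {V : Type*} [NormedAddCommGroup V] [InnerProductSpace ℝ V]
    (v x : V) : V := x - pairR x v • v

/-- if `γ₁, γ₂` are nonzero orthogonal vectors, `σ = γ₁ + γ₂`, and
`⟨χ|γ₁∨⟩ = ⟨χ|γ₂∨⟩`, then `s_{γ₁}(s_{γ₂}(χ)) = s_σ(χ) = χ - ⟨χ|σ∨⟩ σ`. -/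
theorem stmt9 {V : Type*} [NormedAddCommGroup V] [InnerProductSpace ℝ V]
    (γ₁ γ₂ : V) (h₁ : γ₁ ≠ 0) (h₂ : γ₂ ≠ 0) (horth : ⟪γ₁, γ₂⟫ = 0)
    (χ : V) (hχ : pairR χ γ₁ = pairR χ γ₂) :
    reflV γ₁ (reflV γ₂ χ) = χ - pairR χ (γ₁ + γ₂) • (γ₁ + γ₂) := by
  have h11 : ⟪γ₁, γ₁⟫ ≠ 0 := fun h => h₁ (inner_self_eq_zero.mp h)
  have h22 : ⟪γ₂, γ₂⟫ ≠ 0 := fun h => h₂ (inner_self_eq_zero.mp h)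
  have h11p : (0:ℝ) < ⟪γ₁, γ₁⟫ := lt_of_le_of_ne real_inner_self_nonneg (Ne.symm h11)
  have h22p : (0:ℝ) < ⟪γ₂, γ₂⟫ := lt_of_le_of_ne real_inner_self_nonneg (Ne.symm h22)
  have hss : ⟪γ₁, γ₁⟫ + ⟪γ₂, γ₂⟫ ≠ 0 := by positivity
  have horth' : ⟪γ₂, γ₁⟫ = 0 := by rw [real_inner_comm]; exact horth
  set c := pairR χ γ₂ with hc
  have hχ1 : ⟪χ, γ₁⟫ = c * ⟪γ₁, γ₁⟫ / 2 := by
    have := hχ; rw [hc] at this ⊢; rw [← this]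
    unfold pairR; field_simp
  have hχ2 : ⟪χ, γ₂⟫ = c * ⟪γ₂, γ₂⟫ / 2 := by
    rw [hc]; unfold pairR; field_simp
  have e1 : pairR (reflV γ₂ χ) γ₁ = c := by
    unfold reflV pairR
    rw [inner_sub_left, inner_smul_left, horth', hχ1]
    field_simp
    simp
  have e2 : pairR χ (γ₁ + γ₂) = c := by
    unfold pairR
    simp only [inner_add_left, inner_add_right, horth, horth', hχ1, hχ2]
    field_simp; ring
  rw [e2]
  show reflV γ₂ χ - pairR (reflV γ₂ χ) γ₁ • γ₁ = _
  rw [e1]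
  show χ - pairR χ γ₂ • γ₂ - c • γ₁ = _
  rw [← hc, smul_add]
  abel
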